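/- For r ≥ 2, let H(r) be the graph on vertex set {1, …, 2r+4} in which V₁ = {1, …, r+2} induces a complete graph, V₂ = {r+3, …, 2r+4} induces a complete graph, and additionally vertex i is adjacent to vertex r+2+i for each i = 1, …, r; let U₁ = {r+1, r+2} and U₂ = {2r+3, 2r+4}. Then: (i) a set S of vertices with |S ∩ V₁| ≥ |S ∩ V₂| is a zero forcing set of H(r) if and only if |S ∩ V₁| ≥ r+1 and S ∩ U₂ ≠ ∅; (ii) the zero forcing number of H(r) equals r+2 and every minimal zero forcing set of H(r) has cardinality r+2; (iii) the induced subgraph of the zero forcing TAR graph of H(r) on zero forcing sets of cardinality at most 2r+1 is disconnected, while the induced subgraph on zero forcing sets of cardinality at most 2r+2 is connected. -/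

import Mathlib

/-- The TAR (token addition/removal) graph of a predicate `P` on finite subsets of `V`:
vertices are the `P`-sets, two `P`-sets being adjacent iff their symmetric difference
has exactly one element. -/
def tarGraph {V : Type*} [DecidableEq V] (P : Finset V → Prop) :
    SimpleGraph {S : Finset V // P S} where
  Adj S T := (symmDiff S.1 T.1).card = 1
  symm := ⟨by intro S T h; rwa [symmDiff_comm]⟩
  loopless := ⟨by intro S h; simp [symmDiff_self] at h⟩

/-- `S` is a minimal `P`-set: `S` is a `P`-set and no proper subset of `S` is a `P`-set. -/
def IsMinimalPSet {V : Type*} (P : Finset V → Prop) (S : Finset V) : Prop :=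
  P S ∧ ∀ T : Finset V, T ⊂ S → ¬ P T

/-- `R` is `P`-irrelevant: no minimal `P`-set contains any vertex of `R`. -/
def IsIrrelevant {V : Type*} (P : Finset V → Prop) (R : Finset V) : Prop :=
  ∀ S : Finset V, IsMinimalPSet P S → ∀ v ∈ R, v ∉ S

/-- A set `B` is forcing-closed in `G` if no vertex of `B` has exactly one neighbor
outside `B` (i.e. no force can be performed from `B`). The zero forcing closure of `S`
is the smallest forcing-closed set containing `S`. -/
def ZFClosed {V : Type*} (G : SimpleGraph V) (B : Finset V) : Prop :=
  ∀ v ∈ B, ¬ ∃! w : V, G.Adj v w ∧ w ∉ B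

/-- `S` is a zero forcing set of `G`: the zero forcing closure of `S` is all of `V`,
equivalently every forcing-closed set containing `S` is all of `V`. -/
def IsZeroForcingSet {V : Type*} [Fintype V] (G : SimpleGraph V) (S : Finset V) : Prop :=
  ∀ B : Finset V, S ⊆ B → ZFClosed G B → B = Finset.univ

/-- The `k`-TAR graph: the induced subgraph of the TAR graph of `P` on the
`P`-sets of cardinality at most `k`. -/
def tarGraphLe {V : Type*} [DecidableEq V] (P : Finset V → Prop) (k : ℕ) :
    SimpleGraph {S : Finset V // P S ∧ S.card ≤ k} where
  Adj S T := (symmDiff S.1 T.1).card = 1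
  symm := ⟨by intro S T h; rwa [symmDiff_comm]⟩
  loopless := ⟨by intro S h; simp [symmDiff_self] at h⟩

/-- The graph `H(r)`: its `2r+4` vertices (here `0`-indexed, so paper vertex `i`
corresponds to `Fin` value `i-1`) consist of a clique `V₁` on values `< r+2` and a
clique `V₂` on values `≥ r+2`, together with a matching joining value `i` to value
`i + (r+2)` for `i < r`. -/
def Hgraph (r : ℕ) : SimpleGraph (Fin (2 * r + 4)) :=
  SimpleGraph.fromRel (fun a b =>
    (a.val < r + 2 ∧ b.val < r + 2) ∨
    (r + 2 ≤ a.val ∧ r + 2 ≤ b.val) ∨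
    (a.val < r ∧ b.val = a.val + (r + 2)))

lemma hadj {r : ℕ} (a b : Fin (2*r+4)) : (Hgraph r).Adj a b ↔ a ≠ b ∧
    ((a.val < r + 2 ∧ b.val < r + 2) ∨ (r + 2 ≤ a.val ∧ r + 2 ≤ b.val) ∨
     (a.val < r ∧ b.val = a.val + (r + 2)) ∨ (b.val < r ∧ a.val = b.val + (r + 2))) := by
  show a ≠ b ∧ _ ↔ _
  constructor
  · rintro ⟨h, h2 | h2⟩ <;> exact ⟨h, by tauto⟩
  · rintro ⟨h, h2⟩ ; exact ⟨h, by tauto⟩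

-- card of interval filter
lemma card_filter_Ico {n : ℕ} (a b : ℕ) :
    ((Finset.univ : Finset (Fin n)).filter (fun v => a ≤ v.val ∧ v.val < b)).card = min b n - a := by
  have h : ∀ m ∈ Finset.Ico a (min b n), m < n := by
    intro m hm; simp [Finset.mem_Ico] at hm; omega
  have : (Finset.univ : Finset (Fin n)).filter (fun v => a ≤ v.val ∧ v.val < b)
      = (Finset.Ico a (min b n)).attachFin h := by
    ext v; simp only [Finset.mem_filter, Finset.mem_univ, true_and, Finset.mem_attachFin, Finset.mem_Ico]
    have := v.isLt; omega
  rw [this, Finset.card_attachFin, Nat.card_Ico]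

lemma exists_not_mem_of_ne_univ {α : Type*} [Fintype α] {B : Finset α} (h : B ≠ Finset.univ) :
    ∃ z, z ∉ B := by
  by_contra hc; push_neg at hc; exact h (Finset.eq_univ_iff_forall.mpr hc)

lemma fin_ne_val {n : ℕ} {a b : Fin n} (h : a ≠ b) : a.val ≠ b.val :=
  fun hv => h (Fin.ext hv)

/-- Force lemma, side 1. -/
lemma force1 {r : ℕ} (hr : 2 ≤ r) (B : Finset (Fin (2*r+4))) (u : Fin (2*r+4))
    (hu : u ∈ B) (hu2 : 2*r+2 ≤ u.val)
    (hV1 : ∀ x y : Fin (2*r+4), x.val < r+2 → y.val < r+2 → x ∉ B → y ∉ B → x = y)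
    (hne : B ≠ Finset.univ) :
    ∃ v ∈ B, ∃! w, (Hgraph r).Adj v w ∧ w ∉ B := by
  by_cases hx : ∃ x : Fin (2*r+4), x.val < r+2 ∧ x ∉ B
  · obtain ⟨x, hx1, hx2⟩ := hx
    have hex : ∀ m : ℕ, m < 2*r+4 → ∃ i : Fin (2*r+4), i.val = m := fun m hm => ⟨⟨m, hm⟩, rfl⟩
    obtain ⟨i, hival⟩ := hex (if x.val = r+1 then r else r+1) (by split <;> omega)
    have hix : i.val ≠ x.val := by split at hival <;> omega
    have hilt : i.val < r + 2 := by split at hival <;> omega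
    have hige : r ≤ i.val := by split at hival <;> omega
    have hiB : i ∈ B := by
      by_contra hiB
      exact hix (congrArg Fin.val (hV1 i x hilt hx1 hiB hx2))
    refine ⟨i, hiB, x, ⟨(hadj _ _).mpr ⟨fun h => hix (congrArg Fin.val h),
      Or.inl ⟨hilt, hx1⟩⟩, hx2⟩, ?_⟩
    rintro w ⟨hw, hwB⟩
    rw [hadj] at hw
    obtain ⟨hne', hc⟩ := hw
    have : w.val < r + 2 := by omega
    exact hV1 w x this hx1 hwB hx2
  · push_neg at hx
    by_cases hj : ∃ j : Fin (2*r+4), j ∉ B ∧ j.val < 2*r+2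
    · obtain ⟨j, hjB, hjlt⟩ := hj
      have hjge : r+2 ≤ j.val := by
        by_contra h; exact hjB (hx j (by omega))
      have hex : ∀ m : ℕ, m < 2*r+4 → ∃ i : Fin (2*r+4), i.val = m := fun m hm => ⟨⟨m, hm⟩, rfl⟩
      obtain ⟨i, hival⟩ := hex (j.val - (r+2)) (by omega)
      refine ⟨i, hx _ (by omega), j, ⟨(hadj _ _).mpr ⟨fun h => by
          have := congrArg Fin.val h; omega, Or.inr (Or.inr (Or.inl ⟨by omega, by omega⟩))⟩,
        hjB⟩, ?_⟩
      rintro w ⟨hw, hwB⟩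
      rw [hadj] at hw
      obtain ⟨hne', hc⟩ := hw
      have hwge : r+2 ≤ w.val := by
        by_contra h; exact hwB (hx w (by omega))
      exact Fin.ext (by omega)
    · push_neg at hj
      obtain ⟨z, hz⟩ := exists_not_mem_of_ne_univ hne
      have hz2 := hj z hz
      have hzu : z ≠ u := fun h => hz (h ▸ hu)
      have hzuv := fin_ne_val hzu
      have hzlt := z.isLt
      refine ⟨u, hu, z, ⟨(hadj _ _).mpr ⟨fun h => hzuv (congrArg Fin.val h).symm,
        Or.inr (Or.inl ⟨by omega, by omega⟩)⟩, hz⟩, ?_⟩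
      rintro w ⟨hw, hwB⟩
      rw [hadj] at hw
      obtain ⟨hne', _⟩ := hw
      have hw2 := hj w hwB
      have h1 := fin_ne_val hne'
      have := w.isLt
      exact Fin.ext (by omega)

/-- Force lemma, side 2. -/
lemma force2 {r : ℕ} (hr : 2 ≤ r) (B : Finset (Fin (2*r+4))) (u : Fin (2*r+4))
    (hu : u ∈ B) (hu1a : r ≤ u.val) (hu1b : u.val < r+2)
    (hV2 : ∀ x y : Fin (2*r+4), r+2 ≤ x.val → r+2 ≤ y.val → x ∉ B → y ∉ B → x = y)
    (hne : B ≠ Finset.univ) :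
    ∃ v ∈ B, ∃! w, (Hgraph r).Adj v w ∧ w ∉ B := by
  by_cases hx : ∃ x : Fin (2*r+4), r+2 ≤ x.val ∧ x ∉ B
  · obtain ⟨x, hx1, hx2⟩ := hx
    have hxlt := x.isLt
    have hex : ∀ m : ℕ, m < 2*r+4 → ∃ i : Fin (2*r+4), i.val = m := fun m hm => ⟨⟨m, hm⟩, rfl⟩
    obtain ⟨i, hival⟩ := hex (if x.val = 2*r+3 then 2*r+2 else 2*r+3) (by split <;> omega)
    have hix : i.val ≠ x.val := by split at hival <;> omega
    have hige : r + 2 ≤ i.val := by split at hival <;> omega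
    have hige2 : 2*r + 2 ≤ i.val := by split at hival <;> omega
    have hiB : i ∈ B := by
      by_contra hiB
      exact hix (congrArg Fin.val (hV2 i x hige hx1 hiB hx2))
    refine ⟨i, hiB, x, ⟨(hadj _ _).mpr ⟨fun h => hix (congrArg Fin.val h),
      Or.inr (Or.inl ⟨hige, hx1⟩)⟩, hx2⟩, ?_⟩
    rintro w ⟨hw, hwB⟩
    rw [hadj] at hw
    obtain ⟨hne', hc⟩ := hw
    have : r + 2 ≤ w.val := by omega
    exact hV2 w x this hx1 hwB hx2
  · push_neg at hx
    by_cases hj : ∃ j : Fin (2*r+4), j ∉ B ∧ j.val < r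
    · obtain ⟨j, hjB, hjlt⟩ := hj
      have hex : ∀ m : ℕ, m < 2*r+4 → ∃ i : Fin (2*r+4), i.val = m := fun m hm => ⟨⟨m, hm⟩, rfl⟩
      obtain ⟨i, hival⟩ := hex (j.val + (r+2)) (by omega)
      refine ⟨i, hx _ (by omega), j, ⟨(hadj _ _).mpr ⟨fun h => by
          have := congrArg Fin.val h; omega,
          Or.inr (Or.inr (Or.inr ⟨by omega, by omega⟩))⟩, hjB⟩, ?_⟩
      rintro w ⟨hw, hwB⟩
      rw [hadj] at hw
      obtain ⟨hne', hc⟩ := hw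
      have hwlt : w.val < r + 2 := by
        by_contra h; exact hwB (hx w (by omega))
      exact Fin.ext (by omega)
    · push_neg at hj
      obtain ⟨z, hz⟩ := exists_not_mem_of_ne_univ hne
      have hz2 := hj z hz
      have hz3 : z.val < r + 2 := by
        by_contra h; exact hz (hx z (by omega))
      have hzu : z ≠ u := fun h => hz (h ▸ hu)
      have hzuv := fin_ne_val hzu
      refine ⟨u, hu, z, ⟨(hadj _ _).mpr ⟨fun h => hzuv (congrArg Fin.val h).symm,
        Or.inl ⟨hu1b, hz3⟩⟩, hz⟩, ?_⟩
      rintro w ⟨hw, hwB⟩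
      rw [hadj] at hw
      obtain ⟨hne', _⟩ := hw
      have hw2 := hj w hwB
      have hw3 : w.val < r + 2 := by
        by_contra h; exact hwB (hx w (by omega))
      have h1 := fin_ne_val hne'
      exact Fin.ext (by omega)


lemma not_eu_none {α : Type*} {p : α → Prop} (h : ∀ w, ¬ p w) : ¬ ∃! w, p w :=
  fun ⟨w, hw, _⟩ => h w hw

lemma not_eu_two {α : Type*} {p : α → Prop} (w₁ w₂ : α) (h₁ : p w₁) (h₂ : p w₂)
    (hne : w₁ ≠ w₂) : ¬ ∃! w, p w :=
  fun ⟨_, _, hu⟩ => hne ((hu w₁ h₁).trans (hu w₂ h₂).symm)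

lemma closedU1 {r : ℕ} (hr : 2 ≤ r) :
    ZFClosed (Hgraph r) (Finset.univ.filter fun v : Fin (2*r+4) => ¬(r ≤ v.val ∧ v.val < r+2)) := by
  intro v hv
  simp only [Finset.mem_filter, Finset.mem_univ, true_and] at hv
  have hmem : ∀ w : Fin (2*r+4),
      (w ∉ Finset.univ.filter fun v : Fin (2*r+4) => ¬(r ≤ v.val ∧ v.val < r+2)) ↔
      (r ≤ w.val ∧ w.val < r+2) := by
    intro w; simp
  rcases (by omega : v.val < r ∨ r+2 ≤ v.val) with hc | hc
  · have hex : ∀ m : ℕ, m < 2*r+4 → ∃ i : Fin (2*r+4), i.val = m := fun m hm => ⟨⟨m, hm⟩, rfl⟩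
    obtain ⟨w₁, h1⟩ := hex r (by omega)
    obtain ⟨w₂, h2⟩ := hex (r+1) (by omega)
    refine not_eu_two w₁ w₂ ⟨(hadj _ _).mpr ⟨fun h => by have := congrArg Fin.val h; omega,
        Or.inl ⟨by omega, by omega⟩⟩, (hmem w₁).mpr ⟨by omega, by omega⟩⟩
      ⟨(hadj _ _).mpr ⟨fun h => by have := congrArg Fin.val h; omega,
        Or.inl ⟨by omega, by omega⟩⟩, (hmem w₂).mpr ⟨by omega, by omega⟩⟩
      (fun h => by have := congrArg Fin.val h; omega)
  · refine not_eu_none ?_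
    rintro w ⟨haw, hwB⟩
    rw [hmem] at hwB
    rw [hadj] at haw
    obtain ⟨-, hd⟩ := haw
    omega

lemma closedU2 {r : ℕ} (hr : 2 ≤ r) :
    ZFClosed (Hgraph r) (Finset.univ.filter fun v : Fin (2*r+4) => v.val < 2*r+2) := by
  intro v hv
  simp only [Finset.mem_filter, Finset.mem_univ, true_and] at hv
  have hmem : ∀ w : Fin (2*r+4),
      (w ∉ Finset.univ.filter fun v : Fin (2*r+4) => v.val < 2*r+2) ↔ 2*r+2 ≤ w.val := by
    intro w; simp
  rcases (by omega : v.val < r+2 ∨ r+2 ≤ v.val) with hc | hc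
  · refine not_eu_none ?_
    rintro w ⟨haw, hwB⟩
    rw [hmem] at hwB
    rw [hadj] at haw
    obtain ⟨-, hd⟩ := haw
    omega
  · have hex : ∀ m : ℕ, m < 2*r+4 → ∃ i : Fin (2*r+4), i.val = m := fun m hm => ⟨⟨m, hm⟩, rfl⟩
    obtain ⟨w₁, h1⟩ := hex (2*r+2) (by omega)
    obtain ⟨w₂, h2⟩ := hex (2*r+3) (by omega)
    refine not_eu_two w₁ w₂ ⟨(hadj _ _).mpr ⟨fun h => by have := congrArg Fin.val h; omega,
        Or.inr (Or.inl ⟨by omega, by omega⟩)⟩, (hmem w₁).mpr (by omega)⟩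
      ⟨(hadj _ _).mpr ⟨fun h => by have := congrArg Fin.val h; omega,
        Or.inr (Or.inl ⟨by omega, by omega⟩)⟩, (hmem w₂).mpr (by omega)⟩
      (fun h => by have := congrArg Fin.val h; omega)

lemma closedPairs {r : ℕ} (B : Finset (Fin (2*r+4))) (x₁ y₁ x₂ y₂ : Fin (2*r+4))
    (hx₁ : x₁.val < r+2) (hy₁ : y₁.val < r+2) (hx₂ : r+2 ≤ x₂.val) (hy₂ : r+2 ≤ y₂.val)
    (hxy₁ : x₁ ≠ y₁) (hxy₂ : x₂ ≠ y₂)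
    (hx₁B : x₁ ∉ B) (hy₁B : y₁ ∉ B) (hx₂B : x₂ ∉ B) (hy₂B : y₂ ∉ B) :
    ZFClosed (Hgraph r) B := by
  intro v hv
  rcases lt_or_ge v.val (r+2) with hc | hc
  · refine not_eu_two x₁ y₁ ⟨(hadj _ _).mpr ⟨fun h => hx₁B (h ▸ hv), Or.inl ⟨hc, hx₁⟩⟩, hx₁B⟩
      ⟨(hadj _ _).mpr ⟨fun h => hy₁B (h ▸ hv), Or.inl ⟨hc, hy₁⟩⟩, hy₁B⟩ hxy₁
  · refine not_eu_two x₂ y₂ ⟨(hadj _ _).mpr ⟨fun h => hx₂B (h ▸ hv), Or.inr (Or.inl ⟨hc, hx₂⟩)⟩, hx₂B⟩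
      ⟨(hadj _ _).mpr ⟨fun h => hy₂B (h ▸ hv), Or.inr (Or.inl ⟨hc, hy₂⟩)⟩, hy₂B⟩ hxy₂


lemma card_filter_val_lt {n b : ℕ} :
    ((Finset.univ : Finset (Fin n)).filter (fun v => v.val < b)).card = min b n := by
  have h := card_filter_Ico (n := n) 0 b
  rw [Nat.sub_zero] at h
  rw [← h]
  congr 1
  apply Finset.filter_congr
  intro x _; simp

lemma card_filter_val_ge {n a : ℕ} :
    ((Finset.univ : Finset (Fin n)).filter (fun v => a ≤ v.val)).card = n - a := by
  have h := card_filter_Ico (n := n) a n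
  rw [min_self] at h
  rw [← h]
  congr 1
  apply Finset.filter_congr
  intro x _
  have := x.isLt
  omega

lemma filter_compl_card {n : ℕ} (S : Finset (Fin n)) (p : Fin n → Prop) [DecidablePred p] :
    (Finset.univ.filter (fun v => p v ∧ v ∉ S)).card + (S.filter p).card
      = (Finset.univ.filter p).card := by
  have h1 : Finset.univ.filter (fun v => p v ∧ v ∉ S) = (Finset.univ.filter p) \ S := by
    ext v; simp [and_comm]
  have h2 : S.filter p = (Finset.univ.filter p) ∩ S := by
    ext v; simp [and_comm]
  rw [h1, h2, Finset.card_sdiff_add_card_inter]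

lemma atMostOneMissing {r : ℕ} {S B : Finset (Fin (2*r+4))} (p : Fin (2*r+4) → Prop)
    [DecidablePred p] (hSB : S ⊆ B) (hcard : r+1 ≤ (S.filter p).card)
    (huniv : (Finset.univ.filter p).card = r+2) :
    ∀ x y : Fin (2*r+4), p x → p y → x ∉ B → y ∉ B → x = y := by
  have h1 := filter_compl_card B p
  have h2 : (S.filter p).card ≤ (B.filter p).card :=
    Finset.card_le_card (Finset.filter_subset_filter _ hSB)
  have h3 : (Finset.univ.filter (fun v => p v ∧ v ∉ B)).card ≤ 1 := by omega
  intro x y hx hy hxB hyB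
  exact Finset.card_le_one.mp h3 x (by simp [hx, hxB]) y (by simp [hy, hyB])

lemma cardV1univ {r : ℕ} :
    ((Finset.univ : Finset (Fin (2*r+4))).filter (fun v => v.val < r+2)).card = r+2 := by
  rw [card_filter_val_lt]; omega

lemma cardV2univ {r : ℕ} :
    ((Finset.univ : Finset (Fin (2*r+4))).filter (fun v => r+2 ≤ v.val)).card = r+2 := by
  rw [card_filter_val_ge]; omega

/-- the full characterization of zero forcing sets of `Hgraph r` -/
lemma zfs_char {r : ℕ} (hr : 2 ≤ r) (S : Finset (Fin (2*r+4))) :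
    IsZeroForcingSet (Hgraph r) S ↔
      ((r+1 ≤ (S.filter fun v => v.val < r+2).card ∧
          (S.filter fun v => 2*r+2 ≤ v.val).Nonempty) ∨
       (r+1 ≤ (S.filter fun v => r+2 ≤ v.val).card ∧
          (S.filter fun v => r ≤ v.val ∧ v.val < r+2).Nonempty)) := by
  constructor
  · intro hZ
    -- S meets U₂
    have hU2 : (S.filter fun v => 2*r+2 ≤ v.val).Nonempty := by
      rw [Finset.nonempty_iff_ne_empty]
      intro hemp
      have hsub : S ⊆ Finset.univ.filter fun v : Fin (2*r+4) => v.val < 2*r+2 := by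
        intro v hv
        simp only [Finset.mem_filter, Finset.mem_univ, true_and]
        by_contra h
        exact (Finset.eq_empty_iff_forall_notMem.mp hemp v) (Finset.mem_filter.mpr ⟨hv, by omega⟩)
      have := hZ _ hsub (closedU2 hr)
      have h23 : (⟨2*r+3, by omega⟩ : Fin (2*r+4)) ∈ Finset.univ.filter
          fun v : Fin (2*r+4) => v.val < 2*r+2 := by rw [this]; exact Finset.mem_univ _
      simp only [Finset.mem_filter] at h23
      omega
    have hU1 : (S.filter fun v => r ≤ v.val ∧ v.val < r+2).Nonempty := by
      rw [Finset.nonempty_iff_ne_empty]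
      intro hemp
      have hsub : S ⊆ Finset.univ.filter fun v : Fin (2*r+4) => ¬(r ≤ v.val ∧ v.val < r+2) := by
        intro v hv
        simp only [Finset.mem_filter, Finset.mem_univ, true_and]
        intro h
        exact (Finset.eq_empty_iff_forall_notMem.mp hemp v)
          (Finset.mem_filter.mpr ⟨hv, h⟩)
      have := hZ _ hsub (closedU1 hr)
      have h23 : (⟨r, by omega⟩ : Fin (2*r+4)) ∈ Finset.univ.filter
          fun v : Fin (2*r+4) => ¬(r ≤ v.val ∧ v.val < r+2) := by rw [this]; exact Finset.mem_univ _
      simp only [Finset.mem_filter] at h23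
      omega
    -- one of the two sides is large
    have hlarge : r+1 ≤ (S.filter fun v => v.val < r+2).card ∨
        r+1 ≤ (S.filter fun v => r+2 ≤ v.val).card := by
      by_contra h
      push_neg at h
      obtain ⟨h1, h2⟩ := h
      have e1 := filter_compl_card S (fun v : Fin (2*r+4) => v.val < r+2)
      have e2 := filter_compl_card S (fun v : Fin (2*r+4) => r+2 ≤ v.val)
      rw [cardV1univ] at e1
      rw [cardV2univ] at e2
      have c1 : 1 < (Finset.univ.filter (fun v : Fin (2*r+4) => v.val < r+2 ∧ v ∉ S)).card := by
        omega
      have c2 : 1 < (Finset.univ.filter (fun v : Fin (2*r+4) => r+2 ≤ v.val ∧ v ∉ S)).card := by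
        omega
      obtain ⟨x₁, hx₁, y₁, hy₁, hxy₁⟩ := Finset.one_lt_card.mp c1
      obtain ⟨x₂, hx₂, y₂, hy₂, hxy₂⟩ := Finset.one_lt_card.mp c2
      simp only [Finset.mem_filter, Finset.mem_univ, true_and] at hx₁ hy₁ hx₂ hy₂
      set B := Finset.univ.filter (fun v : Fin (2*r+4) => v ≠ x₁ ∧ v ≠ y₁ ∧ v ≠ x₂ ∧ v ≠ y₂)
        with hBdef
      have hmemB : ∀ v : Fin (2*r+4), v ∈ B ↔ (v ≠ x₁ ∧ v ≠ y₁ ∧ v ≠ x₂ ∧ v ≠ y₂) := by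
        intro v; simp [hBdef]
      have hcl : ZFClosed (Hgraph r) B := by
        apply closedPairs B x₁ y₁ x₂ y₂ hx₁.1 hy₁.1 hx₂.1 hy₂.1 hxy₁ hxy₂ <;>
          (rw [hmemB]; push_neg; intro h; simp_all)
      have hSB : S ⊆ B := by
        intro v hv
        rw [hmemB]
        refine ⟨?_, ?_, ?_, ?_⟩ <;> (rintro rfl; simp_all)
      have := hZ B hSB hcl
      have : x₁ ∈ B := this ▸ Finset.mem_univ _
      rw [hmemB] at this
      exact this.1 rfl
    rcases hlarge with h | h
    · exact Or.inl ⟨h, hU2⟩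
    · exact Or.inr ⟨h, hU1⟩
  · rintro (⟨hn, hne⟩ | ⟨hn, hne⟩) <;> intro B hSB hcl <;> by_contra hBne
    · obtain ⟨u, hu⟩ := hne
      rw [Finset.mem_filter] at hu
      obtain ⟨v, hv, hforce⟩ := force1 hr B u (hSB hu.1) hu.2
        (atMostOneMissing _ hSB hn cardV1univ) hBne
      exact hcl v hv hforce
    · obtain ⟨u, hu⟩ := hne
      rw [Finset.mem_filter] at hu
      obtain ⟨v, hv, hforce⟩ := force2 hr B u (hSB hu.1) hu.2.1 hu.2.2
        (atMostOneMissing _ hSB hn cardV2univ) hBne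
      exact hcl v hv hforce

lemma filter_imp_sub {α : Type*} [DecidableEq α] {S : Finset α} {p q : α → Prop}
    [DecidablePred p] [DecidablePred q] (h : ∀ v, p v → q v) : S.filter p ⊆ S.filter q := by
  intro v hv
  rw [Finset.mem_filter] at hv ⊢
  exact ⟨hv.1, h v hv.2⟩

lemma n1_add_n2 {r : ℕ} (S : Finset (Fin (2*r+4))) :
    (S.filter fun v => v.val < r+2).card + (S.filter fun v => r+2 ≤ v.val).card = S.card := by
  have h := Finset.card_filter_add_card_filter_not (s := S)
    (p := fun v : Fin (2*r+4) => v.val < r+2)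
  have he : S.filter (fun v : Fin (2*r+4) => ¬ v.val < r+2) = S.filter (fun v => r+2 ≤ v.val) := by
    apply Finset.filter_congr
    intro x _
    simp only [not_lt, eq_iff_iff]
  rw [he] at h
  exact h

lemma u2_nonempty_of_n2 {r : ℕ} {S : Finset (Fin (2*r+4))}
    (h : r+1 ≤ (S.filter fun v => r+2 ≤ v.val).card) :
    (S.filter fun v => 2*r+2 ≤ v.val).Nonempty := by
  rw [Finset.nonempty_iff_ne_empty]
  intro hemp
  have hsub : S.filter (fun v => r+2 ≤ v.val) ⊆
      Finset.univ.filter (fun v : Fin (2*r+4) => r+2 ≤ v.val ∧ v.val < 2*r+2) := by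
    intro v hv
    rw [Finset.mem_filter] at hv ⊢
    refine ⟨Finset.mem_univ _, hv.2, ?_⟩
    by_contra hcon
    exact Finset.eq_empty_iff_forall_notMem.mp hemp v (Finset.mem_filter.mpr ⟨hv.1, by omega⟩)
  have := Finset.card_le_card hsub
  rw [card_filter_Ico] at this
  omega

lemma u1_nonempty_of_n1 {r : ℕ} {S : Finset (Fin (2*r+4))}
    (h : r+1 ≤ (S.filter fun v => v.val < r+2).card) :
    (S.filter fun v => r ≤ v.val ∧ v.val < r+2).Nonempty := by
  rw [Finset.nonempty_iff_ne_empty]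
  intro hemp
  have hsub : S.filter (fun v => v.val < r+2) ⊆
      Finset.univ.filter (fun v : Fin (2*r+4) => v.val < r) := by
    intro v hv
    rw [Finset.mem_filter] at hv ⊢
    refine ⟨Finset.mem_univ _, ?_⟩
    by_contra hcon
    exact Finset.eq_empty_iff_forall_notMem.mp hemp v (Finset.mem_filter.mpr ⟨hv.1, by omega⟩)
  have := Finset.card_le_card hsub
  rw [card_filter_val_lt] at this
  omega

lemma zfs_card_lower {r : ℕ} (hr : 2 ≤ r) {S : Finset (Fin (2*r+4))}
    (hZ : IsZeroForcingSet (Hgraph r) S) : r + 2 ≤ S.card := by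
  rw [zfs_char hr] at hZ
  have hn := n1_add_n2 S
  rcases hZ with ⟨h1, h2⟩ | ⟨h1, h2⟩
  · have hc := Finset.card_le_card
      (filter_imp_sub (S := S) (fun v (hv : 2*r+2 ≤ v.val) => (by omega : r+2 ≤ v.val)))
    have := h2.card_pos
    omega
  · have hc := Finset.card_le_card
      (filter_imp_sub (S := S) (fun v (hv : r ≤ v.val ∧ v.val < r+2) => (by omega : v.val < r+2)))
    have := h2.card_pos
    omega

lemma erase_type1 {r : ℕ} (hr : 2 ≤ r) {S : Finset (Fin (2*r+4))}
    (h1 : r+1 ≤ (S.filter fun v => v.val < r+2).card)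
    (h2 : (S.filter fun v => 2*r+2 ≤ v.val).Nonempty)
    (hc : r+3 ≤ S.card) :
    ∃ v ∈ S, (r+1 ≤ ((S.erase v).filter fun v => v.val < r+2).card ∧
      ((S.erase v).filter fun v => 2*r+2 ≤ v.val).Nonempty) := by
  by_cases hbig : r+2 ≤ (S.filter fun v => v.val < r+2).card
  · obtain ⟨v, hv⟩ : (S.filter fun v : Fin (2*r+4) => v.val < r+2).Nonempty :=
      Finset.card_pos.mp (by omega)
    rw [Finset.mem_filter] at hv
    refine ⟨v, hv.1, ?_, ?_⟩
    · rw [Finset.filter_erase, Finset.card_erase_of_mem (Finset.mem_filter.mpr hv)]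
      omega
    · rw [Finset.filter_erase, Finset.erase_eq_of_notMem]
      · exact h2
      · rw [Finset.mem_filter]; push_neg; intro _; omega
  · -- n1 = r+1, so n2 ≥ 2
    have hn := n1_add_n2 S
    by_cases hmid : ∃ v ∈ S, r+2 ≤ v.val ∧ v.val < 2*r+2
    · obtain ⟨v, hvS, hv1, hv2⟩ := hmid
      refine ⟨v, hvS, ?_, ?_⟩
      · rw [Finset.filter_erase, Finset.erase_eq_of_notMem]
        · exact h1
        · rw [Finset.mem_filter]; push_neg; intro _; omega
      · rw [Finset.filter_erase, Finset.erase_eq_of_notMem]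
        · exact h2
        · rw [Finset.mem_filter]; push_neg; intro _; omega
    · push_neg at hmid
      have heq : S.filter (fun v : Fin (2*r+4) => r+2 ≤ v.val)
          = S.filter (fun v => 2*r+2 ≤ v.val) := by
        apply Finset.filter_congr
        intro x hx
        have := hmid x hx
        constructor <;> (intro h; omega)
      have hu2card : 2 ≤ (S.filter (fun v : Fin (2*r+4) => 2*r+2 ≤ v.val)).card := by
        rw [← heq]; omega
      obtain ⟨v, hv⟩ := h2
      rw [Finset.mem_filter] at hv
      refine ⟨v, hv.1, ?_, ?_⟩
      · rw [Finset.filter_erase, Finset.erase_eq_of_notMem]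
        · exact h1
        · rw [Finset.mem_filter]; push_neg; intro _; omega
      · rw [Finset.filter_erase]
        apply Finset.card_pos.mp
        rw [Finset.card_erase_of_mem (Finset.mem_filter.mpr hv)]
        omega

lemma erase_type2 {r : ℕ} (hr : 2 ≤ r) {S : Finset (Fin (2*r+4))}
    (h1 : r+1 ≤ (S.filter fun v => r+2 ≤ v.val).card)
    (h2 : (S.filter fun v => r ≤ v.val ∧ v.val < r+2).Nonempty)
    (hc : r+3 ≤ S.card) :
    ∃ v ∈ S, (r+1 ≤ ((S.erase v).filter fun v => r+2 ≤ v.val).card ∧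
      ((S.erase v).filter fun v => r ≤ v.val ∧ v.val < r+2).Nonempty) := by
  by_cases hbig : r+2 ≤ (S.filter fun v => r+2 ≤ v.val).card
  · obtain ⟨v, hv⟩ : (S.filter fun v : Fin (2*r+4) => r+2 ≤ v.val).Nonempty :=
      Finset.card_pos.mp (by omega)
    rw [Finset.mem_filter] at hv
    refine ⟨v, hv.1, ?_, ?_⟩
    · rw [Finset.filter_erase, Finset.card_erase_of_mem (Finset.mem_filter.mpr hv)]
      omega
    · rw [Finset.filter_erase, Finset.erase_eq_of_notMem]
      · exact h2
      · rw [Finset.mem_filter]; push_neg; intro _ _; omega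
  · have hn := n1_add_n2 S
    by_cases hmid : ∃ v ∈ S, v.val < r
    · obtain ⟨v, hvS, hv1⟩ := hmid
      refine ⟨v, hvS, ?_, ?_⟩
      · rw [Finset.filter_erase, Finset.erase_eq_of_notMem]
        · exact h1
        · rw [Finset.mem_filter]; push_neg; intro _; omega
      · rw [Finset.filter_erase, Finset.erase_eq_of_notMem]
        · exact h2
        · rw [Finset.mem_filter]; push_neg; intro _ _; omega
    · push_neg at hmid
      have heq : S.filter (fun v : Fin (2*r+4) => v.val < r+2)
          = S.filter (fun v => r ≤ v.val ∧ v.val < r+2) := by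
        apply Finset.filter_congr
        intro x hx
        have := hmid x hx
        constructor <;> (intro h; omega)
      have hu1card : 2 ≤ (S.filter (fun v : Fin (2*r+4) => r ≤ v.val ∧ v.val < r+2)).card := by
        rw [← heq]; omega
      obtain ⟨v, hv⟩ := h2
      rw [Finset.mem_filter] at hv
      refine ⟨v, hv.1, ?_, ?_⟩
      · rw [Finset.filter_erase, Finset.erase_eq_of_notMem]
        · exact h1
        · rw [Finset.mem_filter]; push_neg; intro _; omega
      · rw [Finset.filter_erase]
        apply Finset.card_pos.mp
        rw [Finset.card_erase_of_mem (Finset.mem_filter.mpr hv)]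
        omega


lemma symmDiff_insert_eq {α : Type*} [DecidableEq α] {S : Finset α} {v : α} (hv : v ∉ S) :
    symmDiff S (insert v S) = {v} := by
  ext w
  simp only [Finset.mem_symmDiff, Finset.mem_insert, Finset.mem_singleton]
  by_cases hw : w = v <;> by_cases hwS : w ∈ S <;> simp_all

lemma symmDiff_card_one {α : Type*} [DecidableEq α] {S T : Finset α}
    (h : (symmDiff S T).card = 1) :
    (∃ v ∉ S, T = insert v S) ∨ (∃ v ∉ T, S = insert v T) := by
  have hd : symmDiff S T = (S \ T) ∪ (T \ S) := symmDiff_def S T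
  rw [hd, Finset.card_union_of_disjoint (disjoint_sdiff_sdiff)] at h
  rcases Nat.add_eq_one_iff.mp h with ⟨h1, h2⟩ | ⟨h1, h2⟩
  · left
    obtain ⟨v, hv⟩ := Finset.card_eq_one.mp h2
    have hsub : S ⊆ T := by
      intro w hw
      by_contra hwT
      have : w ∈ S \ T := Finset.mem_sdiff.mpr ⟨hw, hwT⟩
      simp [Finset.card_eq_zero.mp h1] at this
    have hvT : v ∈ T ∧ v ∉ S := by
      have : v ∈ T \ S := hv ▸ Finset.mem_singleton_self v
      exact Finset.mem_sdiff.mp this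
    refine ⟨v, hvT.2, ?_⟩
    ext w
    simp only [Finset.mem_insert]
    constructor
    · intro hw
      by_cases hwS : w ∈ S
      · exact Or.inr hwS
      · left
        have : w ∈ T \ S := Finset.mem_sdiff.mpr ⟨hw, hwS⟩
        rw [hv, Finset.mem_singleton] at this
        exact this
    · rintro (rfl | hw)
      · exact hvT.1
      · exact hsub hw
  · right
    obtain ⟨v, hv⟩ := Finset.card_eq_one.mp h1
    have hsub : T ⊆ S := by
      intro w hw
      by_contra hwT
      have : w ∈ T \ S := Finset.mem_sdiff.mpr ⟨hw, hwT⟩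
      simp [Finset.card_eq_zero.mp h2] at this
    have hvT : v ∈ S ∧ v ∉ T := by
      have : v ∈ S \ T := hv ▸ Finset.mem_singleton_self v
      exact Finset.mem_sdiff.mp this
    refine ⟨v, hvT.2, ?_⟩
    ext w
    simp only [Finset.mem_insert]
    constructor
    · intro hw
      by_cases hwS : w ∈ T
      · exact Or.inr hwS
      · left
        have : w ∈ S \ T := Finset.mem_sdiff.mpr ⟨hw, hwS⟩
        rw [hv, Finset.mem_singleton] at this
        exact this
    · rintro (rfl | hw)
      · exact hvT.1
      · exact hsub hw

def Szero (r : ℕ) : Finset (Fin (2*r+4)) :=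
  insert ⟨2*r+3, by omega⟩ (Finset.univ.filter fun v => v.val < r+1)

def Tzero (r : ℕ) : Finset (Fin (2*r+4)) :=
  insert ⟨r, by omega⟩ (Finset.univ.filter fun v => r+2 ≤ v.val ∧ v.val < 2*r+3)

lemma Szero_spec {r : ℕ} (hr : 2 ≤ r) :
    ((Szero r).filter fun v => v.val < r+2).card = r+1 ∧
    ((Szero r).filter fun v => 2*r+2 ≤ v.val).Nonempty ∧
    (Szero r).card = r+2 ∧
    ((Szero r).filter fun v => r+2 ≤ v.val).card = 1 := by
  have hz : (⟨2*r+3, by omega⟩ : Fin (2*r+4)).val = 2*r+3 := rfl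
  have hA : ((Finset.univ : Finset (Fin (2*r+4))).filter fun v => v.val < r+1).card = r+1 := by
    rw [card_filter_val_lt]; omega
  have hzA : (⟨2*r+3, by omega⟩ : Fin (2*r+4)) ∉
      (Finset.univ : Finset (Fin (2*r+4))).filter fun v => v.val < r+1 := by
    simp only [Finset.mem_filter, Finset.mem_univ, true_and, hz]
    omega
  refine ⟨?_, ?_, ?_, ?_⟩
  · have : (Szero r).filter (fun v => v.val < r+2)
        = (Finset.univ : Finset (Fin (2*r+4))).filter fun v => v.val < r+1 := by
      ext w
      simp only [Szero, Finset.mem_filter, Finset.mem_insert, Finset.mem_univ, true_and,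
        Fin.ext_iff, hz]
      omega
    rw [this, hA]
  · exact ⟨⟨2*r+3, by omega⟩, Finset.mem_filter.mpr ⟨Finset.mem_insert_self _ _, by rw [hz]; omega⟩⟩
  · rw [Szero, Finset.card_insert_of_notMem hzA, hA]
  · have : (Szero r).filter (fun v => r+2 ≤ v.val) = {⟨2*r+3, by omega⟩} := by
      ext w
      simp only [Szero, Finset.mem_filter, Finset.mem_insert, Finset.mem_univ, true_and,
        Fin.ext_iff, hz, Finset.mem_singleton]
      omega
    rw [this, Finset.card_singleton]

lemma Tzero_spec {r : ℕ} (hr : 2 ≤ r) :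
    ((Tzero r).filter fun v => r+2 ≤ v.val).card = r+1 ∧
    ((Tzero r).filter fun v => r ≤ v.val ∧ v.val < r+2).Nonempty ∧
    (Tzero r).card = r+2 := by
  have hz : (⟨r, by omega⟩ : Fin (2*r+4)).val = r := rfl
  have hA : ((Finset.univ : Finset (Fin (2*r+4))).filter
      fun v => r+2 ≤ v.val ∧ v.val < 2*r+3).card = r+1 := by
    rw [card_filter_Ico]; omega
  have hzA : (⟨r, by omega⟩ : Fin (2*r+4)) ∉
      (Finset.univ : Finset (Fin (2*r+4))).filter fun v => r+2 ≤ v.val ∧ v.val < 2*r+3 := by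
    simp only [Finset.mem_filter, Finset.mem_univ, true_and, hz]
    omega
  refine ⟨?_, ?_, ?_⟩
  · have : (Tzero r).filter (fun v => r+2 ≤ v.val)
        = (Finset.univ : Finset (Fin (2*r+4))).filter fun v => r+2 ≤ v.val ∧ v.val < 2*r+3 := by
      ext w
      have hwlt := w.isLt
      simp only [Tzero, Finset.mem_filter, Finset.mem_insert, Finset.mem_univ, true_and,
        Fin.ext_iff, hz]
      omega
    rw [this, hA]
  · exact ⟨⟨r, by omega⟩, Finset.mem_filter.mpr ⟨Finset.mem_insert_self _ _, by rw [hz]; omega⟩⟩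
  · rw [Tzero, Finset.card_insert_of_notMem hzA, hA]

lemma tar_adj_symmDiff {V : Type*} [DecidableEq V] {P : Finset V → Prop} {k : ℕ}
    {A B : {S : Finset V // P S ∧ S.card ≤ k}} (h : (tarGraphLe P k).Adj A B) :
    (symmDiff A.1 B.1).card = 1 := h

lemma disconnected_tar {r : ℕ} (hr : 2 ≤ r) :
    ¬ (tarGraphLe (IsZeroForcingSet (Hgraph r)) (2*r+1)).Connected := by
  intro hconn
  obtain ⟨s1, s2, s3, s4⟩ := Szero_spec hr
  obtain ⟨t1, t2, t3⟩ := Tzero_spec hr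
  have hPS : IsZeroForcingSet (Hgraph r) (Szero r) :=
    (zfs_char hr _).mpr (Or.inl ⟨le_of_eq s1.symm, s2⟩)
  have hPT : IsZeroForcingSet (Hgraph r) (Tzero r) :=
    (zfs_char hr _).mpr (Or.inr ⟨le_of_eq t1.symm, t2⟩)
  set X : {S : Finset (Fin (2*r+4)) // IsZeroForcingSet (Hgraph r) S ∧ S.card ≤ 2*r+1} :=
    ⟨Szero r, hPS, by omega⟩ with hX
  set Y : {S : Finset (Fin (2*r+4)) // IsZeroForcingSet (Hgraph r) S ∧ S.card ≤ 2*r+1} :=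
    ⟨Tzero r, hPT, by omega⟩ with hY
  have key : ∀ A B : {S : Finset (Fin (2*r+4)) // IsZeroForcingSet (Hgraph r) S ∧ S.card ≤ 2*r+1},
      (tarGraphLe (IsZeroForcingSet (Hgraph r)) (2*r+1)).Adj A B →
      (r+1 ≤ (A.1.filter fun v => r+2 ≤ v.val).card ↔
       r+1 ≤ (B.1.filter fun v => r+2 ≤ v.val).card) := by
    intro A B hAB
    rcases symmDiff_card_one (tar_adj_symmDiff hAB) with ⟨v, hv, heq⟩ | ⟨v, hv, heq⟩
    · have hsub : A.1 ⊆ B.1 := by rw [heq]; exact Finset.subset_insert _ _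
      have mono : (A.1.filter fun v => r+2 ≤ v.val).card ≤
          (B.1.filter fun v => r+2 ≤ v.val).card :=
        Finset.card_le_card (Finset.filter_subset_filter _ hsub)
      constructor
      · intro h; omega
      · intro hB
        by_contra hA
        rcases (zfs_char hr _).mp A.2.1 with ⟨ha1, _⟩ | ⟨ha1, _⟩
        · have mono1 : (A.1.filter fun v => v.val < r+2).card ≤
              (B.1.filter fun v => v.val < r+2).card :=
            Finset.card_le_card (Finset.filter_subset_filter _ hsub)
          have := n1_add_n2 B.1
          have := B.2.2
          omega
        · omega
    · have hsub : B.1 ⊆ A.1 := by rw [heq]; exact Finset.subset_insert _ _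
      have mono : (B.1.filter fun v => r+2 ≤ v.val).card ≤
          (A.1.filter fun v => r+2 ≤ v.val).card :=
        Finset.card_le_card (Finset.filter_subset_filter _ hsub)
      constructor
      · intro hA
        by_contra hB
        rcases (zfs_char hr _).mp B.2.1 with ⟨hb1, _⟩ | ⟨hb1, _⟩
        · have mono1 : (B.1.filter fun v => v.val < r+2).card ≤
              (A.1.filter fun v => v.val < r+2).card :=
            Finset.card_le_card (Finset.filter_subset_filter _ hsub)
          have := n1_add_n2 A.1
          have := A.2.2
          omega
        · omega
      · intro h; omega
  have walkkey : ∀ A B : {S : Finset (Fin (2*r+4)) // IsZeroForcingSet (Hgraph r) S ∧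
      S.card ≤ 2*r+1},
      (tarGraphLe (IsZeroForcingSet (Hgraph r)) (2*r+1)).Walk A B →
      (r+1 ≤ (A.1.filter fun v => r+2 ≤ v.val).card ↔
       r+1 ≤ (B.1.filter fun v => r+2 ≤ v.val).card) := by
    intro A B w
    induction w with
    | nil => exact Iff.rfl
    | cons h p ih => exact (key _ _ h).trans ih
  obtain ⟨w⟩ := hconn.preconnected X Y
  have hiff := walkkey X Y w
  rw [hX, hY] at hiff
  simp only at hiff
  rw [s4, t1] at hiff
  omega

lemma tar_reach_insert {V : Type*} [DecidableEq V] {P : Finset V → Prop} {k : ℕ}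
    {S : Finset V} {v : V} (hv : v ∉ S) (hX : P S ∧ S.card ≤ k)
    (hY : P (insert v S) ∧ (insert v S).card ≤ k) :
    (tarGraphLe P k).Reachable ⟨S, hX⟩ ⟨insert v S, hY⟩ :=
  SimpleGraph.Adj.reachable (by
    show (symmDiff S (insert v S)).card = 1
    rw [symmDiff_insert_eq hv]
    exact Finset.card_singleton _)

lemma tar_reach_eq {V : Type*} [DecidableEq V] {P : Finset V → Prop} {k : ℕ}
    {S T : Finset V} (h : S = T) (hX : P S ∧ S.card ≤ k) (hY : P T ∧ T.card ≤ k) :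
    (tarGraphLe P k).Reachable ⟨S, hX⟩ ⟨T, hY⟩ := by
  subst h
  exact SimpleGraph.Reachable.refl _

lemma tar_reach_erase {V : Type*} [DecidableEq V] {P : Finset V → Prop} {k : ℕ}
    {S : Finset V} {v : V} (hv : v ∈ S) (hX : P S ∧ S.card ≤ k)
    (hY : P (S.erase v) ∧ (S.erase v).card ≤ k) :
    (tarGraphLe P k).Reachable ⟨S, hX⟩ ⟨S.erase v, hY⟩ := by
  have h1 : P (insert v (S.erase v)) ∧ (insert v (S.erase v)).card ≤ k := by
    rw [Finset.insert_erase hv]; exact hX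
  exact ((tar_reach_insert (Finset.notMem_erase v S) hY h1).trans
    (tar_reach_eq (Finset.insert_erase hv) h1 hX)).symm

lemma FU_filter1 {r : ℕ} (u : Fin (2*r+4)) (hu : 2*r+2 ≤ u.val) :
    ((insert u (Finset.univ.filter fun v : Fin (2*r+4) => v.val < r+1)).filter
      (fun v => v.val < r+2)) = Finset.univ.filter fun v : Fin (2*r+4) => v.val < r+1 := by
  ext w
  simp only [Finset.mem_filter, Finset.mem_insert, Finset.mem_univ, true_and]
  constructor
  · rintro ⟨rfl | hw, h2⟩
    · omega
    · exact hw
  · intro hw; exact ⟨Or.inr hw, by omega⟩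

lemma FU_valid {r : ℕ} (hr : 2 ≤ r) (u : Fin (2*r+4)) (hu : 2*r+2 ≤ u.val) :
    IsZeroForcingSet (Hgraph r)
      (insert u (Finset.univ.filter fun v : Fin (2*r+4) => v.val < r+1)) ∧
    (insert u (Finset.univ.filter fun v : Fin (2*r+4) => v.val < r+1)).card = r+2 := by
  have hA : ((Finset.univ : Finset (Fin (2*r+4))).filter fun v => v.val < r+1).card = r+1 := by
    rw [card_filter_val_lt]; omega
  have huA : u ∉ (Finset.univ : Finset (Fin (2*r+4))).filter fun v => v.val < r+1 := by
    simp only [Finset.mem_filter, Finset.mem_univ, true_and]; omega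
  constructor
  · apply (zfs_char hr _).mpr
    left
    constructor
    · rw [FU_filter1 u hu, hA]
    · exact ⟨u, Finset.mem_filter.mpr ⟨Finset.mem_insert_self _ _, hu⟩⟩
  · rw [Finset.card_insert_of_notMem huA, hA]

lemma FU_reach_Szero {r : ℕ} (hr : 2 ≤ r) (u : Fin (2*r+4)) (hu : 2*r+2 ≤ u.val)
    (hX : IsZeroForcingSet (Hgraph r)
        (insert u (Finset.univ.filter fun v : Fin (2*r+4) => v.val < r+1)) ∧
      (insert u (Finset.univ.filter fun v : Fin (2*r+4) => v.val < r+1)).card ≤ 2*r+2)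
    (hY : IsZeroForcingSet (Hgraph r) (Szero r) ∧ (Szero r).card ≤ 2*r+2) :
    (tarGraphLe (IsZeroForcingSet (Hgraph r)) (2*r+2)).Reachable
      ⟨insert u (Finset.univ.filter fun v : Fin (2*r+4) => v.val < r+1), hX⟩ ⟨Szero r, hY⟩ := by
  set A : Finset (Fin (2*r+4)) := Finset.univ.filter fun v : Fin (2*r+4) => v.val < r+1
    with hAdef
  set z : Fin (2*r+4) := ⟨2*r+3, by omega⟩ with hzdef
  have hzval : z.val = 2*r+3 := rfl
  have hSz : Szero r = insert z A := rfl
  by_cases hcase : u = z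
  · exact tar_reach_eq (by rw [hcase, hSz]) hX hY
  · have huz := fin_ne_val hcase
    rw [hzval] at huz
    have hult := u.isLt
    have hmemA : ∀ w : Fin (2*r+4), w ∈ A ↔ w.val < r+1 := by
      intro w; simp [hAdef]
    have hznotin : z ∉ insert u A := by
      simp only [Finset.mem_insert, hmemA, hzval]
      push_neg
      exact ⟨fun h => hcase h.symm, by omega⟩
    have hcardFu := (FU_valid hr u hu).2
    have hW : IsZeroForcingSet (Hgraph r) (insert z (insert u A)) ∧
        (insert z (insert u A)).card ≤ 2*r+2 := by
      constructor
      · apply (zfs_char hr _).mpr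
        left
        constructor
        · have hsub : (insert u A).filter (fun v : Fin (2*r+4) => v.val < r+2) ⊆
              (insert z (insert u A)).filter (fun v => v.val < r+2) :=
            Finset.filter_subset_filter _ (Finset.subset_insert _ _)
          have := Finset.card_le_card hsub
          rw [FU_filter1 u hu] at this
          have : r + 1 ≤ ((insert z (insert u A)).filter fun v : Fin (2*r+4) => v.val < r+2).card := by
            have hA : ((Finset.univ : Finset (Fin (2*r+4))).filter
                fun v => v.val < r+1).card = r+1 := by rw [card_filter_val_lt]; omega
            omega
          exact this
        · exact ⟨z, Finset.mem_filter.mpr ⟨Finset.mem_insert_self _ _, by rw [hzval]; omega⟩⟩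
      · rw [Finset.card_insert_of_notMem hznotin, hcardFu]
        omega
    have step1 := tar_reach_insert hznotin hX hW
    have huW : u ∈ insert z (insert u A) :=
      Finset.mem_insert_of_mem (Finset.mem_insert_self _ _)
    have herase : (insert z (insert u A)).erase u = Szero r := by
      rw [hSz]
      ext w
      simp only [Finset.mem_erase, Finset.mem_insert, hmemA, Fin.ext_iff, hzval]
      omega
    have hY' : IsZeroForcingSet (Hgraph r) ((insert z (insert u A)).erase u) ∧
        ((insert z (insert u A)).erase u).card ≤ 2*r+2 := by
      rw [herase]; exact hY
    exact step1.trans ((tar_reach_erase huW hW hY').trans (tar_reach_eq herase hY' hY))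

lemma reachA {r : ℕ} (hr : 2 ≤ r) :
    ∀ n (S : Finset (Fin (2*r+4))), S.card = n →
      r+1 ≤ (S.filter fun v => v.val < r+2).card →
      (S.filter fun v => 2*r+2 ≤ v.val).Nonempty →
      ∀ (hX : IsZeroForcingSet (Hgraph r) S ∧ S.card ≤ 2*r+2)
        (hY : IsZeroForcingSet (Hgraph r) (Szero r) ∧ (Szero r).card ≤ 2*r+2),
        (tarGraphLe (IsZeroForcingSet (Hgraph r)) (2*r+2)).Reachable ⟨S, hX⟩ ⟨Szero r, hY⟩ := by
  intro n
  induction n using Nat.strong_induction_on with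
  | _ n ih =>
  intro S hSn h1 h2 hX hY
  have hle : S.card ≤ 2*r+2 := hX.2
  by_cases hbig : r+3 ≤ S.card
  · obtain ⟨v, hvS, h1', h2'⟩ := erase_type1 hr h1 h2 hbig
    have hZ' : IsZeroForcingSet (Hgraph r) (S.erase v) := (zfs_char hr _).mpr (Or.inl ⟨h1', h2'⟩)
    have hle' : (S.erase v).card ≤ 2*r+2 := by
      rw [Finset.card_erase_of_mem hvS]; omega
    have hrec := ih ((S.erase v).card)
      (by rw [Finset.card_erase_of_mem hvS]; omega) (S.erase v) rfl h1' h2' ⟨hZ', hle'⟩ hY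
    exact (tar_reach_erase hvS hX ⟨hZ', hle'⟩).trans hrec
  · have hZ : IsZeroForcingSet (Hgraph r) S := hX.1
    have hcard : S.card = r+2 := le_antisymm (by omega) (zfs_card_lower hr hZ)
    obtain ⟨u, hu⟩ := h2
    rw [Finset.mem_filter] at hu
    have hn12 := n1_add_n2 S
    have huN : u ∈ S.filter (fun v : Fin (2*r+4) => r+2 ≤ v.val) :=
      Finset.mem_filter.mpr ⟨hu.1, by omega⟩
    have hn2pos : 1 ≤ (S.filter (fun v : Fin (2*r+4) => r+2 ≤ v.val)).card :=
      Finset.card_pos.mpr ⟨u, huN⟩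
    have hn2 : (S.filter fun v : Fin (2*r+4) => r+2 ≤ v.val).card = 1 := by omega
    have hsing : S.filter (fun v : Fin (2*r+4) => r+2 ≤ v.val) = {u} := by
      obtain ⟨a, ha⟩ := Finset.card_eq_one.mp hn2
      rw [ha] at huN ⊢
      rw [Finset.mem_singleton] at huN
      rw [huN]
    have hmiss := filter_compl_card S (fun v : Fin (2*r+4) => v.val < r+2)
    rw [cardV1univ] at hmiss
    have hmiss1 : (Finset.univ.filter
        (fun v : Fin (2*r+4) => v.val < r+2 ∧ v ∉ S)).card = 1 := by omega
    obtain ⟨x, hx⟩ := Finset.card_eq_one.mp hmiss1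
    have hxprop : x.val < r+2 ∧ x ∉ S := by
      have hxx : x ∈ Finset.univ.filter (fun v : Fin (2*r+4) => v.val < r+2 ∧ v ∉ S) := by
        rw [hx]; exact Finset.mem_singleton_self x
      rw [Finset.mem_filter] at hxx
      exact hxx.2
    have huniq : ∀ w : Fin (2*r+4), w.val < r+2 → w ∉ S → w = x := by
      intro w hw1 hw2
      have hww : w ∈ Finset.univ.filter (fun v : Fin (2*r+4) => v.val < r+2 ∧ v ∉ S) :=
        Finset.mem_filter.mpr ⟨Finset.mem_univ _, hw1, hw2⟩
      rw [hx, Finset.mem_singleton] at hww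
      exact hww
    have hEeq : insert x S = insert u (Finset.univ.filter
        fun v : Fin (2*r+4) => v.val < r+2) := by
      ext w
      simp only [Finset.mem_insert, Finset.mem_filter, Finset.mem_univ, true_and]
      constructor
      · rintro (rfl | hw)
        · right; exact hxprop.1
        · by_cases hlt : w.val < r+2
          · right; exact hlt
          · left
            have hmem : w ∈ S.filter (fun v : Fin (2*r+4) => r+2 ≤ v.val) :=
              Finset.mem_filter.mpr ⟨hw, by omega⟩
            rw [hsing, Finset.mem_singleton] at hmem
            exact hmem
      · rintro (rfl | hw)
        · right; exact hu.1
        · by_cases hwS : w ∈ S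
          · right; exact hwS
          · left; exact huniq w hw hwS
    have hxS : x ∉ S := hxprop.2
    have hcardE : (insert x S).card = r+3 := by
      rw [Finset.card_insert_of_notMem hxS, hcard]
    have hE : IsZeroForcingSet (Hgraph r) (insert x S) ∧ (insert x S).card ≤ 2*r+2 := by
      constructor
      · apply (zfs_char hr _).mpr
        left
        constructor
        · have := Finset.card_le_card (Finset.filter_subset_filter
            (fun v : Fin (2*r+4) => v.val < r+2) (Finset.subset_insert x S))
          omega
        · exact ⟨u, Finset.mem_filter.mpr ⟨Finset.mem_insert_of_mem hu.1, hu.2⟩⟩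
      · omega
    have step1 := tar_reach_insert hxS hX hE
    obtain ⟨y, hyval⟩ : ∃ y : Fin (2*r+4), y.val = r+1 := ⟨⟨r+1, by omega⟩, rfl⟩
    have hyE : y ∈ insert x S := by
      rw [hEeq]
      apply Finset.mem_insert_of_mem
      simp only [Finset.mem_filter, Finset.mem_univ, true_and]
      omega
    have herase_eq : (insert x S).erase y = insert u (Finset.univ.filter
        fun v : Fin (2*r+4) => v.val < r+1) := by
      rw [hEeq]
      ext w
      simp only [Finset.mem_erase, Finset.mem_insert, Finset.mem_filter, Finset.mem_univ,
        true_and, Fin.ext_iff, hyval]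
      have := hu.2
      omega
    have hF := FU_valid hr u (by omega)
    have hFv : IsZeroForcingSet (Hgraph r)
        (insert u (Finset.univ.filter fun v : Fin (2*r+4) => v.val < r+1)) ∧
        (insert u (Finset.univ.filter fun v : Fin (2*r+4) => v.val < r+1)).card ≤ 2*r+2 :=
      ⟨hF.1, by rw [hF.2]; omega⟩
    have hE' : IsZeroForcingSet (Hgraph r) ((insert x S).erase y) ∧
        ((insert x S).erase y).card ≤ 2*r+2 := by
      rw [herase_eq]; exact hFv
    exact step1.trans ((tar_reach_erase hyE hE hE').trans
      ((tar_reach_eq herase_eq hE' hFv).trans (FU_reach_Szero hr u (by omega) hFv hY)))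

lemma reachB {r : ℕ} (hr : 2 ≤ r) :
    ∀ n (S : Finset (Fin (2*r+4))), S.card = n →
      r+1 ≤ (S.filter fun v => r+2 ≤ v.val).card →
      (S.filter fun v => r ≤ v.val ∧ v.val < r+2).Nonempty →
      ∀ (hX : IsZeroForcingSet (Hgraph r) S ∧ S.card ≤ 2*r+2)
        (hY : IsZeroForcingSet (Hgraph r) (Szero r) ∧ (Szero r).card ≤ 2*r+2),
        (tarGraphLe (IsZeroForcingSet (Hgraph r)) (2*r+2)).Reachable ⟨S, hX⟩ ⟨Szero r, hY⟩ := by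
  intro n
  induction n using Nat.strong_induction_on with
  | _ n ih =>
  intro S hSn h1 h2 hX hY
  have hle : S.card ≤ 2*r+2 := hX.2
  by_cases hbig : r+3 ≤ S.card
  · obtain ⟨v, hvS, h1', h2'⟩ := erase_type2 hr h1 h2 hbig
    have hZ' : IsZeroForcingSet (Hgraph r) (S.erase v) := (zfs_char hr _).mpr (Or.inr ⟨h1', h2'⟩)
    have hle' : (S.erase v).card ≤ 2*r+2 := by
      rw [Finset.card_erase_of_mem hvS]; omega
    have hrec := ih ((S.erase v).card)
      (by rw [Finset.card_erase_of_mem hvS]; omega) (S.erase v) rfl h1' h2' ⟨hZ', hle'⟩ hY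
    exact (tar_reach_erase hvS hX ⟨hZ', hle'⟩).trans hrec
  · have hZ : IsZeroForcingSet (Hgraph r) S := hX.1
    have hcard : S.card = r+2 := le_antisymm (by omega) (zfs_card_lower hr hZ)
    obtain ⟨u', hu'⟩ := h2
    rw [Finset.mem_filter] at hu'
    have hn12 := n1_add_n2 S
    have huN : u' ∈ S.filter (fun v : Fin (2*r+4) => v.val < r+2) :=
      Finset.mem_filter.mpr ⟨hu'.1, by omega⟩
    have hn1pos : 1 ≤ (S.filter (fun v : Fin (2*r+4) => v.val < r+2)).card :=
      Finset.card_pos.mpr ⟨u', huN⟩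
    have hn1 : (S.filter fun v : Fin (2*r+4) => v.val < r+2).card = 1 := by omega
    have hsing : S.filter (fun v : Fin (2*r+4) => v.val < r+2) = {u'} := by
      obtain ⟨a, ha⟩ := Finset.card_eq_one.mp hn1
      rw [ha] at huN ⊢
      rw [Finset.mem_singleton] at huN
      rw [huN]
    have hSmall : ∀ v ∈ S, v.val < r → False := by
      intro v hv hvlt
      have : v ∈ S.filter (fun v : Fin (2*r+4) => v.val < r+2) :=
        Finset.mem_filter.mpr ⟨hv, by omega⟩
      rw [hsing, Finset.mem_singleton] at this
      subst this
      omega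
    -- A k = vertices with val < k
    have hAcard : ∀ k : ℕ, k ≤ r →
        ((Finset.univ : Finset (Fin (2*r+4))).filter fun v => v.val < k).card = k := by
      intro k hk; rw [card_filter_val_lt]; omega
    have hn2eq : ∀ k : ℕ, k ≤ r → ((S ∪ (Finset.univ.filter
        fun v : Fin (2*r+4) => v.val < k)).filter fun v => r+2 ≤ v.val)
        = S.filter fun v => r+2 ≤ v.val := by
      intro k hk
      ext w
      simp only [Finset.mem_filter, Finset.mem_union, Finset.mem_univ, true_and]
      constructor
      · rintro ⟨hw | hw, hw2⟩
        · exact ⟨hw, hw2⟩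
        · omega
      · rintro ⟨hw, hw2⟩; exact ⟨Or.inl hw, hw2⟩
    have hvalid : ∀ k : ℕ, k ≤ r →
        IsZeroForcingSet (Hgraph r) (S ∪ (Finset.univ.filter
          fun v : Fin (2*r+4) => v.val < k)) ∧
        (S ∪ (Finset.univ.filter fun v : Fin (2*r+4) => v.val < k)).card ≤ 2*r+2 := by
      intro k hk
      constructor
      · apply (zfs_char hr _).mpr
        right
        constructor
        · rw [hn2eq k hk]; exact h1
        · exact ⟨u', Finset.mem_filter.mpr ⟨Finset.mem_union_left _ hu'.1, hu'.2⟩⟩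
      · calc (S ∪ (Finset.univ.filter fun v : Fin (2*r+4) => v.val < k)).card
            ≤ S.card + ((Finset.univ : Finset (Fin (2*r+4))).filter
              fun v => v.val < k).card := Finset.card_union_le _ _
          _ ≤ 2*r+2 := by rw [hcard, hAcard k hk]; omega
    have chain : ∀ k : ℕ, k ≤ r → ∀ (hW : IsZeroForcingSet (Hgraph r)
          (S ∪ (Finset.univ.filter fun v : Fin (2*r+4) => v.val < k)) ∧
          (S ∪ (Finset.univ.filter fun v : Fin (2*r+4) => v.val < k)).card ≤ 2*r+2),
        (tarGraphLe (IsZeroForcingSet (Hgraph r)) (2*r+2)).Reachable ⟨S, hX⟩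
          ⟨S ∪ (Finset.univ.filter fun v : Fin (2*r+4) => v.val < k), hW⟩ := by
      intro k
      induction k with
      | zero =>
        intro _ hW
        apply tar_reach_eq
        ext w
        simp
      | succ k ihk =>
        intro hk hW
        obtain ⟨w, hwval⟩ : ∃ w : Fin (2*r+4), w.val = k := ⟨⟨k, by omega⟩, rfl⟩
        have hunion : S ∪ (Finset.univ.filter fun v : Fin (2*r+4) => v.val < k+1)
            = insert w (S ∪ (Finset.univ.filter fun v : Fin (2*r+4) => v.val < k)) := by
          ext v
          simp only [Finset.mem_union, Finset.mem_filter, Finset.mem_univ, true_and,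
            Finset.mem_insert, Fin.ext_iff, hwval]
          constructor
          · rintro (hv | hv)
            · exact Or.inr (Or.inl hv)
            · by_cases hvk : v.val = k
              · exact Or.inl hvk
              · exact Or.inr (Or.inr (by omega))
          · rintro (hv | hv | hv)
            · right; omega
            · exact Or.inl hv
            · right; omega
        have hwnotin : w ∉ S ∪ (Finset.univ.filter fun v : Fin (2*r+4) => v.val < k) := by
          simp only [Finset.mem_union, Finset.mem_filter, Finset.mem_univ, true_and]
          push_neg
          constructor
          · intro hwS
            exact hSmall w hwS (by omega)
          · omega
        have hWk := hvalid k (by omega)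
        have hWk1 : IsZeroForcingSet (Hgraph r)
            (insert w (S ∪ (Finset.univ.filter fun v : Fin (2*r+4) => v.val < k))) ∧
            (insert w (S ∪ (Finset.univ.filter
              fun v : Fin (2*r+4) => v.val < k))).card ≤ 2*r+2 := by
          rw [← hunion]; exact hW
        exact ((ihk (by omega) hWk).trans (tar_reach_insert hwnotin hWk hWk1)).trans
          (tar_reach_eq hunion.symm hWk1 hW)
    -- W = S ∪ A r is type 1
    have hWval := hvalid r (le_refl r)
    have hWn1 : ((S ∪ (Finset.univ.filter fun v : Fin (2*r+4) => v.val < r)).filter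
        fun v => v.val < r+2) = insert u' (Finset.univ.filter
          fun v : Fin (2*r+4) => v.val < r) := by
      ext v
      simp only [Finset.mem_filter, Finset.mem_union, Finset.mem_univ, true_and,
        Finset.mem_insert]
      constructor
      · rintro ⟨hv | hv, hv2⟩
        · left
          have : v ∈ S.filter (fun v : Fin (2*r+4) => v.val < r+2) :=
            Finset.mem_filter.mpr ⟨hv, hv2⟩
          rw [hsing, Finset.mem_singleton] at this
          exact this
        · right; exact hv
      · rintro (rfl | hv)
        · exact ⟨Or.inl hu'.1, by omega⟩
        · exact ⟨Or.inr hv, by omega⟩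
    have hu'notinA : u' ∉ (Finset.univ : Finset (Fin (2*r+4))).filter
        fun v => v.val < r := by
      simp only [Finset.mem_filter, Finset.mem_univ, true_and]
      omega
    have hWn1card : r+1 ≤ ((S ∪ (Finset.univ.filter
        fun v : Fin (2*r+4) => v.val < r)).filter fun v => v.val < r+2).card := by
      rw [hWn1, Finset.card_insert_of_notMem hu'notinA, hAcard r (le_refl r)]
    have hWu2 : ((S ∪ (Finset.univ.filter fun v : Fin (2*r+4) => v.val < r)).filter
        fun v => 2*r+2 ≤ v.val).Nonempty := by
      obtain ⟨t, ht⟩ := u2_nonempty_of_n2 h1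
      rw [Finset.mem_filter] at ht
      exact ⟨t, Finset.mem_filter.mpr ⟨Finset.mem_union_left _ ht.1, ht.2⟩⟩
    exact (chain r (le_refl r) hWval).trans
      (reachA hr _ _ rfl hWn1card hWu2 hWval hY)

lemma connected_tar {r : ℕ} (hr : 2 ≤ r) :
    (tarGraphLe (IsZeroForcingSet (Hgraph r)) (2*r+2)).Connected := by
  obtain ⟨s1, s2, s3, s4⟩ := Szero_spec hr
  have hPS : IsZeroForcingSet (Hgraph r) (Szero r) :=
    (zfs_char hr _).mpr (Or.inl ⟨le_of_eq s1.symm, s2⟩)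
  have hY : IsZeroForcingSet (Hgraph r) (Szero r) ∧ (Szero r).card ≤ 2*r+2 :=
    ⟨hPS, by omega⟩
  rw [SimpleGraph.connected_iff]
  constructor
  · intro X Y
    have reach : ∀ Z : {S : Finset (Fin (2*r+4)) // IsZeroForcingSet (Hgraph r) S ∧
        S.card ≤ 2*r+2},
        (tarGraphLe (IsZeroForcingSet (Hgraph r)) (2*r+2)).Reachable Z ⟨Szero r, hY⟩ := by
      rintro ⟨S, hprop⟩
      rcases (zfs_char hr _).mp hprop.1 with ⟨a1, a2⟩ | ⟨a1, a2⟩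
      · exact reachA hr S.card S rfl a1 a2 hprop hY
      · exact reachB hr S.card S rfl a1 a2 hprop hY
    exact (reach X).trans (reach Y).symm
  · exact ⟨⟨Szero r, hY⟩⟩


/-- For `r ≥ 2` and `H(r)` as above, with `V₁` the clique on values `< r+2`, `V₂` the
clique on values `≥ r+2` and `U₂` the pair of values `≥ 2r+2`:
(i) a set `S` with `|S ∩ V₂| ≤ |S ∩ V₁|` is a zero forcing set of `H(r)` iff
`|S ∩ V₁| ≥ r+1` and `S ∩ U₂ ≠ ∅`; (ii) the zero forcing number of `H(r)` is `r+2`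
and every minimal zero forcing set of `H(r)` has cardinality `r+2`; (iii) the TAR
graph of `H(r)` restricted to zero forcing sets of cardinality at most `2r+1` is
disconnected, while the restriction to cardinality at most `2r+2` is connected. -/
theorem Hgraph_zfs_tar (r : ℕ) (hr : 2 ≤ r) :
    (∀ S : Finset (Fin (2 * r + 4)),
        (S.filter (fun v => r + 2 ≤ v.val)).card ≤
          (S.filter (fun v => v.val < r + 2)).card →
        (IsZeroForcingSet (Hgraph r) S ↔
          (r + 1 ≤ (S.filter (fun v => v.val < r + 2)).card ∧
            (S.filter (fun v => 2 * r + 2 ≤ v.val)).Nonempty))) ∧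
    IsLeast {k : ℕ | ∃ S : Finset (Fin (2 * r + 4)),
        IsZeroForcingSet (Hgraph r) S ∧ S.card = k} (r + 2) ∧
    (∀ S : Finset (Fin (2 * r + 4)),
        IsMinimalPSet (IsZeroForcingSet (Hgraph r)) S → S.card = r + 2) ∧
    ¬ (tarGraphLe (IsZeroForcingSet (Hgraph r)) (2 * r + 1)).Connected ∧
    (tarGraphLe (IsZeroForcingSet (Hgraph r)) (2 * r + 2)).Connected := by
  obtain ⟨s1, s2, s3, s4⟩ := Szero_spec hr
  have hPS : IsZeroForcingSet (Hgraph r) (Szero r) :=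
    (zfs_char hr _).mpr (Or.inl ⟨le_of_eq s1.symm, s2⟩)
  refine ⟨?_, ⟨⟨Szero r, hPS, s3⟩, ?_⟩, ?_, disconnected_tar hr, connected_tar hr⟩
  · intro S hcond
    constructor
    · intro hZ
      rcases (zfs_char hr S).mp hZ with ⟨h1, h2⟩ | ⟨h1, h2⟩
      · exact ⟨h1, h2⟩
      · exact ⟨le_trans h1 hcond, u2_nonempty_of_n2 h1⟩
    · rintro ⟨h1, h2⟩
      exact (zfs_char hr S).mpr (Or.inl ⟨h1, h2⟩)
  · rintro k ⟨S, hS, rfl⟩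
    exact zfs_card_lower hr hS
  · rintro S ⟨hP, hmin⟩
    have hlow := zfs_card_lower hr hP
    by_contra hne
    have hbig : r + 3 ≤ S.card := by omega
    rcases (zfs_char hr S).mp hP with ⟨h1, h2⟩ | ⟨h1, h2⟩
    · obtain ⟨v, hvS, e1, e2⟩ := erase_type1 hr h1 h2 hbig
      exact hmin (S.erase v) (Finset.erase_ssubset hvS) ((zfs_char hr _).mpr (Or.inl ⟨e1, e2⟩))
    · obtain ⟨v, hvS, e1, e2⟩ := erase_type2 hr h1 h2 hbig
      exact hmin (S.erase v) (Finset.erase_ssubset hvS) ((zfs_char hr _).mpr (Or.inr ⟨e1, e2⟩))
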